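/- Let λ, b > 0 with 1 ≤ 1/(λb) ≤ 3/2, and define φ_λ(x) = arccos(1/(λb) − cos x) on its natural domain. Then φ_λ is concave on the set where 0 < φ_λ(x) < x < π/2. -/
import Mathlib

open Real Set

lemma arccos_antitone : Antitone Real.arccos := by
  intro u v h
  unfold Real.arccos
  linarith [Real.monotone_arcsin h]

theorem phi_concave (b lam : ℝ) (hb : 0 < b) (hlam : 0 < lam)
    (h1 : 1 ≤ 1 / (lam * b)) (h2 : 1 / (lam * b) ≤ 3 / 2) :
    ConcaveOn ℝ
      {x : ℝ | 0 < Real.arccos (1 / (lam * b) - Real.cos x) ∧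
        Real.arccos (1 / (lam * b) - Real.cos x) < x ∧ x < Real.pi / 2}
      (fun x => Real.arccos (1 / (lam * b) - Real.cos x)) := by
  set c : ℝ := 1 / (lam * b) with hc
  have hpi := Real.pi_pos
  -- membership characterization
  have hS : {x : ℝ | 0 < Real.arccos (c - Real.cos x) ∧
        Real.arccos (c - Real.cos x) < x ∧ x < Real.pi / 2}
      = Set.Ioo (Real.arccos (c / 2)) (Real.arccos (c - 1)) := by
    ext x
    simp only [Set.mem_setOf_eq, Set.mem_Ioo]
    constructor
    · rintro ⟨h0, hxlt, hxp⟩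
      have hx0 : 0 < x := lt_trans h0 hxlt
      have hcos1 : c - Real.cos x < 1 := Real.arccos_pos.mp h0
      have hax : Real.arccos (Real.cos x) = x :=
        Real.arccos_cos hx0.le (by linarith)
      have hcoslt : Real.cos x < c / 2 := by
        by_contra hcon
        push_neg at hcon
        have : Real.arccos (Real.cos x) ≤ Real.arccos (c - Real.cos x) :=
          arccos_antitone (by linarith)
        rw [hax] at this
        linarith
      have hcosx : Real.cos x ∈ Set.Icc (-1 : ℝ) 1 :=
        ⟨Real.neg_one_le_cos x, Real.cos_le_one x⟩
      constructor
      · have := Real.strictAntiOn_arccos hcosx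
          (⟨by linarith, by linarith⟩ : c / 2 ∈ Set.Icc (-1 : ℝ) 1) hcoslt
        rwa [hax] at this
      · have := Real.strictAntiOn_arccos
          (⟨by linarith, by linarith⟩ : c - 1 ∈ Set.Icc (-1 : ℝ) 1) hcosx (by linarith)
        rwa [hax] at this
    · rintro ⟨hax, hbx⟩
      have hx0 : 0 < x := lt_of_le_of_lt (Real.arccos_nonneg _) hax
      have hxp : x < Real.pi / 2 :=
        lt_of_lt_of_le hbx (Real.arccos_le_pi_div_two.mpr (by linarith))
      have hcg : c - 1 < Real.cos x := by
        have := Real.cos_lt_cos_of_nonneg_of_le_pi hx0.le (Real.arccos_le_pi _) hbx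
        rwa [Real.cos_arccos (by linarith) (by linarith)] at this
      have hcl : Real.cos x < c / 2 := by
        have := Real.cos_lt_cos_of_nonneg_of_le_pi (Real.arccos_nonneg _)
          (by linarith) hax
        rwa [Real.cos_arccos (by linarith) (by linarith)] at this
      refine ⟨Real.arccos_pos.mpr (by linarith), ?_, hxp⟩
      have hcosx : Real.cos x ∈ Set.Icc (-1 : ℝ) 1 :=
        ⟨Real.neg_one_le_cos x, Real.cos_le_one x⟩
      have := Real.strictAntiOn_arccos hcosx
        (⟨by linarith [Real.neg_one_le_cos x], by linarith⟩ :
          c - Real.cos x ∈ Set.Icc (-1 : ℝ) 1) (by linarith)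
      rwa [Real.arccos_cos hx0.le (by linarith)] at this
  rw [hS]
  -- facts about points of the interval
  have key : ∀ t ∈ Set.Ioo (Real.arccos (c / 2)) (Real.arccos (c - 1)),
      0 ≤ t ∧ t ≤ Real.pi / 2 ∧ 0 ≤ c - Real.cos t ∧ c - Real.cos t ≤ 1 := by
    intro t ht
    have ht0 : 0 ≤ t := le_trans (Real.arccos_nonneg _) ht.1.le
    have htp : t < Real.pi / 2 :=
      lt_of_lt_of_le ht.2 (Real.arccos_le_pi_div_two.mpr (by linarith))
    have hcg : c - 1 < Real.cos t := by
      have := Real.cos_lt_cos_of_nonneg_of_le_pi ht0 (Real.arccos_le_pi _) ht.2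
      rwa [Real.cos_arccos (by linarith) (by linarith)] at this
    exact ⟨ht0, htp.le, by linarith [Real.cos_le_one t], by linarith⟩
  refine ⟨convex_Ioo _ _, ?_⟩
  intro x hx y hy a a' ha ha' hab
  simp only [smul_eq_mul]
  obtain ⟨hx0, hxp, hux0, hux1⟩ := key x hx
  obtain ⟨hy0, hyp, huy0, huy1⟩ := key y hy
  set u : ℝ := Real.arccos (c - Real.cos x) with hu
  set v : ℝ := Real.arccos (c - Real.cos y) with hv
  have hu0 : 0 ≤ u := Real.arccos_nonneg _
  have hv0 : 0 ≤ v := Real.arccos_nonneg _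
  have hup : u ≤ Real.pi / 2 := Real.arccos_le_pi_div_two.mpr hux0
  have hvp : v ≤ Real.pi / 2 := Real.arccos_le_pi_div_two.mpr huy0
  have hcu : Real.cos u = c - Real.cos x := Real.cos_arccos (by linarith) hux1
  have hcv : Real.cos v = c - Real.cos y := Real.cos_arccos (by linarith) huy1
  -- concavity of cos on [-π/2, π/2]
  have hconc := strictConcaveOn_cos_Icc.concaveOn
  have hcw : a * Real.cos u + a' * Real.cos v ≤ Real.cos (a * u + a' * v) := by
    have := hconc.2 (⟨by linarith, hup⟩ : u ∈ Set.Icc (-(Real.pi/2)) (Real.pi/2))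
      (⟨by linarith, hvp⟩ : v ∈ Set.Icc (-(Real.pi/2)) (Real.pi/2)) ha ha' hab
    simpa using this
  have hcz : a * Real.cos x + a' * Real.cos y ≤ Real.cos (a * x + a' * y) := by
    have := hconc.2 (⟨by linarith, hxp⟩ : x ∈ Set.Icc (-(Real.pi/2)) (Real.pi/2))
      (⟨by linarith, hyp⟩ : y ∈ Set.Icc (-(Real.pi/2)) (Real.pi/2)) ha ha' hab
    simpa using this
  -- combine
  have hmain : c - Real.cos (a * x + a' * y) ≤ Real.cos (a * u + a' * v) := by
    have heq : a * Real.cos u + a' * Real.cos v = c - (a * Real.cos x + a' * Real.cos y) := by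
      rw [hcu, hcv]; linear_combination c * hab
    linarith
  have hw0 : 0 ≤ a * u + a' * v := by positivity
  have hwp : a * u + a' * v ≤ Real.pi / 2 := by
    have h1' := mul_le_mul_of_nonneg_left hup ha
    have h2' := mul_le_mul_of_nonneg_left hvp ha'
    have : a * (Real.pi / 2) + a' * (Real.pi / 2) = Real.pi / 2 := by
      rw [← add_mul, hab, one_mul]
    linarith
  have := arccos_antitone hmain
  rwa [Real.arccos_cos hw0 (by linarith)] at this
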